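/- arXiv:1702.04795 — 2 statements merged into one kernel-verified Lean document; each statement's English description precedes it below -/
import Mathlib

section
/- Let R=(r_n) and R'=(r'_n) be strictly increasing sequences of natural numbers with r_{n+1}/r_n → θ and r'_{n+1}/r'_n → θ', where θ, θ' are real numbers with 1 < θ ≤ θ'. Then for all integers a_0,…,a_d, the sequence (Σ_{i=0}^d a_i (r_{n+i} + r'_{n+i})) / (r_n + r'_n) converges to Σ_{i=0}^d a_i θ'^i as n → ∞. -/
open Filter


private lemma aux_tendsto_zero_of_ratio (u : ℕ → ℝ) (hpos : ∀ n, 1 ≤ n → 0 < u n)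
    (L : ℝ) (hL0 : 0 ≤ L) (hL1 : L < 1)
    (h : Tendsto (fun n => u (n + 1) / u n) atTop (nhds L)) :
    Tendsto u atTop (nhds 0) := by
  set c := (L + 1) / 2 with hc
  have hc1 : c < 1 := by rw [hc]; linarith
  have hcpos : 0 < c := by rw [hc]; linarith
  have hLc : L < c := by rw [hc]; linarith
  have hev : ∀ᶠ n in atTop, u (n + 1) / u n < c := h.eventually (gt_mem_nhds hLc)
  obtain ⟨N₀, hN₀⟩ := eventually_atTop.mp hev
  set N := max N₀ 1 with hNdef
  have hNpos : ∀ k, 0 < u (N + k) :=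
    fun k => hpos _ (le_trans (le_max_right _ _) (Nat.le_add_right _ _))
  have key : ∀ k, u (N + k) ≤ c ^ k * u N := by
    intro k
    induction k with
    | zero => simp
    | succ k ih =>
      have h1 : u (N + k + 1) / u (N + k) < c :=
        hN₀ _ (le_trans (le_max_left _ _) (Nat.le_add_right _ _))
      have h2 : u (N + k + 1) < c * u (N + k) := by
        have := (div_lt_iff₀ (hNpos k)).mp h1
        linarith
      calc u (N + (k + 1)) = u (N + k + 1) := by rw [Nat.add_assoc]
        _ ≤ c * u (N + k) := h2.le
        _ ≤ c * (c ^ k * u N) := mul_le_mul_of_nonneg_left ih hcpos.le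
        _ = c ^ (k + 1) * u N := by ring
  have hlim : Tendsto (fun k => u (N + k)) atTop (nhds 0) := by
    have hgeo : Tendsto (fun k => c ^ k * u N) atTop (nhds 0) := by
      have := (tendsto_pow_atTop_nhds_zero_of_lt_one hcpos.le hc1).mul_const (u N)
      simpa using this
    exact squeeze_zero (fun k => (hNpos k).le) (fun k => key k) hgeo
  have h' : Tendsto (fun k => u (k + N)) atTop (nhds 0) :=
    hlim.congr (fun k => by rw [Nat.add_comm])
  exact (tendsto_add_atTop_iff_nat N).mp h'

private lemma aux_pow_ratio (r : ℕ → ℕ) (hr : StrictMono r) (θ : ℝ)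
    (h1 : Tendsto (fun n => (r (n + 1) : ℝ) / r n) atTop (nhds θ)) (i : ℕ) :
    Tendsto (fun n => (r (n + i) : ℝ) / r n) atTop (nhds (θ ^ i)) := by
  have hpos : ∀ n, 1 ≤ n → (0 : ℝ) < r n := by
    intro n hn
    have h1n : 1 ≤ r n := le_trans hn hr.le_apply
    exact_mod_cast Nat.lt_of_lt_of_le Nat.zero_lt_one h1n
  induction i with
  | zero =>
    have heq : (fun _ : ℕ => (1 : ℝ)) =ᶠ[atTop] fun n => (r (n + 0) : ℝ) / r n := by
      filter_upwards [eventually_ge_atTop 1] with n hn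
      rw [Nat.add_zero, div_self (hpos n hn).ne']
    simpa using Tendsto.congr' heq tendsto_const_nhds
  | succ i ih =>
    have hcomp : Tendsto (fun n => (r (n + i + 1) : ℝ) / r (n + i)) atTop (nhds θ) :=
      h1.comp (tendsto_add_atTop_nat i)
    have hmul := hcomp.mul ih
    have heq : (fun n => (r (n + i + 1) : ℝ) / r (n + i) * ((r (n + i) : ℝ) / r n))
        =ᶠ[atTop] fun n => (r (n + (i + 1)) : ℝ) / r n := by
      filter_upwards [eventually_ge_atTop 1] with n hn
      have h2 : (0 : ℝ) < r (n + i) := hpos _ (le_trans hn (Nat.le_add_right _ _))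
      rw [div_mul_div_comm, Nat.add_assoc]
      rw [mul_comm ((r (n + i) : ℝ)) ((r n : ℝ))]
      rw [mul_div_mul_right _ _ h2.ne']
    have : θ * θ ^ i = θ ^ (i + 1) := by ring
    rw [← this]
    exact Tendsto.congr' heq hmul

/-- if `r (n+1) / r n → θ` and `r' (n+1) / r' n → θ'` with
`1 < θ ≤ θ'`, then for all integers `a₀, …, a_d`,
`(∑ᵢ aᵢ (r (n+i) + r' (n+i))) / (r n + r' n) → ∑ᵢ aᵢ θ'^i`. -/
theorem sum_sequence_operator_ratio_tendsto
    (r r' : ℕ → ℕ) (hr : StrictMono r) (hr' : StrictMono r')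
    (θ θ' : ℝ) (hθ : 1 < θ) (hθθ' : θ ≤ θ')
    (h1 : Tendsto (fun n => (r (n + 1) : ℝ) / r n) atTop (nhds θ))
    (h2 : Tendsto (fun n => (r' (n + 1) : ℝ) / r' n) atTop (nhds θ'))
    (d : ℕ) (a : ℕ → ℤ) :
    Tendsto
      (fun n =>
        (∑ i ∈ Finset.range (d + 1), (a i : ℝ) * ((r (n + i) : ℝ) + (r' (n + i) : ℝ))) /
          ((r n : ℝ) + (r' n : ℝ)))
      atTop (nhds (∑ i ∈ Finset.range (d + 1), (a i : ℝ) * θ' ^ i)) := by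
  have hpos : ∀ n, 1 ≤ n → (0 : ℝ) < r n := by
    intro n hn
    have h1n : 1 ≤ r n := le_trans hn hr.le_apply
    exact_mod_cast Nat.lt_of_lt_of_le Nat.zero_lt_one h1n
  have hpos' : ∀ n, 1 ≤ n → (0 : ℝ) < r' n := by
    intro n hn
    have h1n : 1 ≤ r' n := le_trans hn hr'.le_apply
    exact_mod_cast Nat.lt_of_lt_of_le Nat.zero_lt_one h1n
  have hθ'pos : (0 : ℝ) < θ' := lt_trans one_pos (lt_of_lt_of_le hθ hθθ')
  -- the weight w n = r n / (r n + r' n)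
  set w : ℕ → ℝ := fun n => (r n : ℝ) / ((r n : ℝ) + (r' n : ℝ)) with hw
  have hwmem : ∀ n, 1 ≤ n → 0 ≤ w n ∧ w n ≤ 1 := by
    intro n hn
    have h₁ := hpos n hn
    have h₂ := hpos' n hn
    have hs : (0 : ℝ) < (r n : ℝ) + r' n := by linarith
    constructor
    · exact div_nonneg h₁.le hs.le
    · rw [div_le_one hs]; linarith
  -- w tends to 0 when θ < θ', used in term 3
  have hwzero : θ < θ' → Tendsto w atTop (nhds 0) := by
    intro hlt
    have hu : Tendsto (fun n => (r n : ℝ) / r' n) atTop (nhds 0) := by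
      apply aux_tendsto_zero_of_ratio _ (fun n hn => div_pos (hpos n hn) (hpos' n hn)) (θ / θ')
      · positivity
      · rw [div_lt_one hθ'pos]; exact hlt
      · have hinv : Tendsto (fun n => ((r' (n + 1) : ℝ) / r' n)⁻¹) atTop (nhds θ'⁻¹) :=
          h2.inv₀ hθ'pos.ne'
        have hmul := h1.mul hinv
        have heq : (fun n => (r (n + 1) : ℝ) / r n * ((r' (n + 1) : ℝ) / r' n)⁻¹)
            =ᶠ[atTop] fun n => ((r (n + 1) : ℝ) / r' (n + 1)) / ((r n : ℝ) / r' n) := by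
          filter_upwards [eventually_ge_atTop 1] with n hn
          have p1 := hpos n hn
          have p2 := hpos' n hn
          have p3 := hpos (n + 1) (by omega)
          have p4 := hpos' (n + 1) (by omega)
          field_simp
        have : θ * θ'⁻¹ = θ / θ' := (div_eq_mul_inv θ θ').symm
        rw [← this]
        exact Tendsto.congr' heq hmul
    have h0 : Tendsto (fun _ : ℕ => (0 : ℝ)) atTop (nhds 0) := tendsto_const_nhds
    apply squeeze_zero' (g := fun n => (r n : ℝ) / r' n)
    · filter_upwards [eventually_ge_atTop 1] with n hn
      exact (hwmem n hn).1
    · filter_upwards [eventually_ge_atTop 1] with n hn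
      have h₁ := hpos n hn
      have h₂ := hpos' n hn
      exact div_le_div_of_nonneg_left h₁.le h₂ (by linarith)
    · exact hu
  -- per-index limit
  have T : ∀ i : ℕ, Tendsto (fun n => ((r (n + i) : ℝ) + (r' (n + i) : ℝ)) /
      ((r n : ℝ) + (r' n : ℝ))) atTop (nhds (θ' ^ i)) := by
    intro i
    set A : ℕ → ℝ := fun n => (r (n + i) : ℝ) / r n with hA
    set B : ℕ → ℝ := fun n => (r' (n + i) : ℝ) / r' n with hB
    have hAlim : Tendsto A atTop (nhds (θ ^ i)) := aux_pow_ratio r hr θ h1 i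
    have hBlim : Tendsto B atTop (nhds (θ' ^ i)) := aux_pow_ratio r' hr' θ' h2 i
    -- term 1
    have t1 : Tendsto (fun n => (A n - θ ^ i) * w n) atTop (nhds 0) := by
      apply squeeze_zero_norm' (a := fun n => |A n - θ ^ i|)
      · filter_upwards [eventually_ge_atTop 1] with n hn
        rw [Real.norm_eq_abs, abs_mul]
        have := hwmem n hn
        calc |A n - θ ^ i| * |w n| ≤ |A n - θ ^ i| * 1 := by
              apply mul_le_mul_of_nonneg_left _ (abs_nonneg _)
              rw [abs_le]; constructor <;> linarith [this.1, this.2]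
          _ = |A n - θ ^ i| := mul_one _
      · have := (hAlim.sub (tendsto_const_nhds (x := θ ^ i))).abs
        simpa using this
    have t2 : Tendsto (fun n => (B n - θ' ^ i) * (1 - w n)) atTop (nhds 0) := by
      apply squeeze_zero_norm' (a := fun n => |B n - θ' ^ i|)
      · filter_upwards [eventually_ge_atTop 1] with n hn
        rw [Real.norm_eq_abs, abs_mul]
        have := hwmem n hn
        calc |B n - θ' ^ i| * |1 - w n| ≤ |B n - θ' ^ i| * 1 := by
              apply mul_le_mul_of_nonneg_left _ (abs_nonneg _)
              rw [abs_le]; constructor <;> linarith [this.1, this.2]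
          _ = |B n - θ' ^ i| := mul_one _
      · have := (hBlim.sub (tendsto_const_nhds (x := θ' ^ i))).abs
        simpa using this
    have t3 : Tendsto (fun n => (θ ^ i - θ' ^ i) * w n) atTop (nhds 0) := by
      rcases eq_or_lt_of_le hθθ' with heq | hlt
      · subst heq
        simpa using tendsto_const_nhds (x := (0:ℝ)) (f := atTop)
      · have := (hwzero hlt).const_mul (θ ^ i - θ' ^ i)
        simpa using this
    have hsum : Tendsto (fun n => θ' ^ i + ((A n - θ ^ i) * w n + (B n - θ' ^ i) * (1 - w n)
        + (θ ^ i - θ' ^ i) * w n)) atTop (nhds (θ' ^ i)) := by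
      have := tendsto_const_nhds (x := θ' ^ i) (f := (atTop : Filter ℕ)) |>.add ((t1.add t2).add t3)
      simpa using this
    apply Tendsto.congr' _ hsum
    filter_upwards [eventually_ge_atTop 1] with n hn
    have p1 := hpos n hn
    have p2 := hpos' n hn
    have ps : (0 : ℝ) < (r n : ℝ) + r' n := by linarith
    show θ' ^ i + ((A n - θ ^ i) * w n + (B n - θ' ^ i) * (1 - w n) + (θ ^ i - θ' ^ i) * w n)
      = ((r (n + i) : ℝ) + (r' (n + i) : ℝ)) / ((r n : ℝ) + (r' n : ℝ))
    rw [hA, hB, hw]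
    field_simp
    ring
  -- combine
  have hT : Tendsto (fun n => ∑ i ∈ Finset.range (d + 1),
      (a i : ℝ) * (((r (n + i) : ℝ) + (r' (n + i) : ℝ)) / ((r n : ℝ) + (r' n : ℝ))))
      atTop (nhds (∑ i ∈ Finset.range (d + 1), (a i : ℝ) * θ' ^ i)) :=
    tendsto_finset_sum _ (fun i _ => (T i).const_mul _)
  apply hT.congr
  intro n
  rw [Finset.sum_div]
  exact Finset.sum_congr rfl (fun i _ => (mul_div_assoc _ _ _).symm)
end

section
/- Let R=(r_n) and R'=(r'_n) be regular sequences with r_{n+1}/r_n → θ and r'_{n+1}/r'_n → θ', where θ, θ' are real numbers with 1 < θ ≤ θ'. Set r''_n = r_n + r'_n. Then for all integers a_0,…,a_d with a_d ≠ 0, the set {n ∈ ℕ : a_0 r''_n + a_1 r''_{n+1} + ⋯ + a_d r''_{n+d} = 0} is either finite or cofinite in ℕ. -/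
open Filter

/-- `r` satisfies a linear recurrence relation over `ℤ` whose characteristic
polynomial `X^k - ∑_{i<k} cᵢ X^i` is the minimal polynomial of `θ` over `ℚ`. -/
def SatisfiesRecurrenceMinpoly (r : ℕ → ℕ) (θ : ℝ) : Prop :=
  ∃ k : ℕ, 0 < k ∧ ∃ c : ℕ → ℤ,
    (∀ n : ℕ, (r (n + k) : ℤ) = ∑ i ∈ Finset.range k, c i * r (n + i)) ∧
    (Polynomial.X ^ k - ∑ i ∈ Finset.range k, Polynomial.C (c i : ℚ) * Polynomial.X ^ i)
      = minpoly ℚ θ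

/-- A strictly increasing sequence `r` of naturals is regular if the ratios
`r (n+1) / r n` tend to `∞` or converge to some real `θ > 1` which, if
algebraic, is such that `r` satisfies a linear recurrence whose characteristic
polynomial is the minimal polynomial of `θ`. -/
def IsRegularSequence (r : ℕ → ℕ) : Prop :=
  StrictMono r ∧
    (Tendsto (fun n => (r (n + 1) : ℝ) / r n) atTop atTop ∨
      ∃ θ : ℝ, 1 < θ ∧ Tendsto (fun n => (r (n + 1) : ℝ) / r n) atTop (nhds θ) ∧
        (IsAlgebraic ℚ θ → SatisfiesRecurrenceMinpoly r θ))


open Polynomial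

noncomputable def papply (s : ℕ → ℚ) (F : ℚ[X]) (n : ℕ) : ℚ :=
  ∑ i ∈ Finset.range (F.natDegree + 1), F.coeff i * s (n + i)

lemma papply_eq_sum (s : ℕ → ℚ) (F : ℚ[X]) (n N : ℕ) (hN : F.natDegree < N) :
    ∑ i ∈ Finset.range N, F.coeff i * s (n + i) = papply s F n := by
  refine (Finset.sum_subset (Finset.range_subset_range.2 hN) fun i _ hi => ?_).symm
  rw [Finset.mem_range, not_lt] at hi
  rw [Polynomial.coeff_eq_zero_of_natDegree_lt (lt_of_lt_of_le (Nat.lt_of_succ_le hi) le_rfl), zero_mul]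

lemma papply_add (s : ℕ → ℚ) (F G : ℚ[X]) (n : ℕ) :
    papply s (F + G) n = papply s F n + papply s G n := by
  have hN : ∀ H : ℚ[X], H.natDegree < F.natDegree + G.natDegree + (F+G).natDegree + 1 → True := fun _ _ => trivial
  set N := F.natDegree + G.natDegree + (F + G).natDegree + 1 with hNdef
  rw [← papply_eq_sum s (F+G) n N (by omega), ← papply_eq_sum s F n N (by omega),
    ← papply_eq_sum s G n N (by omega), ← Finset.sum_add_distrib]
  exact Finset.sum_congr rfl fun i _ => by rw [Polynomial.coeff_add, add_mul]

lemma papply_monomial_mul (s : ℕ → ℚ) (F : ℚ[X]) (j : ℕ) (q : ℚ) (n : ℕ) :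
    papply s (monomial j q * F) n = q * papply s F (n + j) := by
  have hd : (monomial j q * F).natDegree < j + (F.natDegree + 1) := by
    have := Polynomial.natDegree_mul_le (p := monomial j q) (q := F)
    have := Polynomial.natDegree_monomial_le (a := q) (m := j)
    omega
  rw [← papply_eq_sum s _ n _ hd, Finset.sum_range_add]
  have hco : ∀ i, (monomial j q * F).coeff i = if j ≤ i then q * F.coeff (i - j) else 0 := by
    intro i
    rw [← Polynomial.C_mul_X_pow_eq_monomial, mul_assoc, mul_comm ((X:ℚ[X])^j) F, ← mul_assoc,
      Polynomial.coeff_mul_X_pow', Polynomial.coeff_C_mul]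
  have h1 : ∑ i ∈ Finset.range j, (monomial j q * F).coeff i * s (n + i) = 0 := by
    refine Finset.sum_eq_zero fun i hi => ?_
    rw [hco, if_neg (by simpa using Finset.mem_range.1 hi |>.not_ge), zero_mul]
  rw [h1, zero_add, ← papply_eq_sum s F (n + j) _ (Nat.lt_succ_self _), Finset.mul_sum]
  refine Finset.sum_congr rfl fun i _ => ?_
  rw [hco, if_pos (Nat.le_add_right _ _), Nat.add_sub_cancel_left, Nat.add_assoc]
  ring

lemma papply_of_dvd (s : ℕ → ℚ) (μ : ℚ[X]) (hμ : ∀ n, papply s μ n = 0)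
    (P : ℚ[X]) (h : μ ∣ P) : ∀ n, papply s P n = 0 := by
  obtain ⟨Q, rfl⟩ := h
  induction Q using Polynomial.induction_on' with
  | add p q hp hq => intro n; rw [mul_add, papply_add, hp, hq, add_zero]
  | monomial j q => intro n; rw [mul_comm, papply_monomial_mul, hμ, mul_zero]

lemma coeff_sum_C_mul_X_pow (m : ℕ) (b : ℕ → ℚ) (i : ℕ) :
    (∑ j ∈ Finset.range m, Polynomial.C (b j) * Polynomial.X ^ j).coeff i
      = if i < m then b i else 0 := by
  rw [Polynomial.finset_sum_coeff]
  simp only [Polynomial.coeff_C_mul, Polynomial.coeff_X_pow]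
  rw [Finset.sum_congr rfl (fun j hj => by rw [mul_ite, mul_one, mul_zero]),
    Finset.sum_ite_eq (Finset.range m) i b]
  simp [Finset.mem_range]


lemma ratio_pow (r : ℕ → ℕ) (hmono : StrictMono r) (θ : ℝ)
    (h : Tendsto (fun n => (r (n + 1) : ℝ) / r n) atTop (nhds θ)) (i : ℕ) :
    Tendsto (fun n => (r (n + i) : ℝ) / r n) atTop (nhds (θ ^ i)) := by
  have hrpos : ∀ n : ℕ, 1 ≤ n → (0 : ℝ) < r n := fun n hn =>
    Nat.cast_pos.2 (lt_of_lt_of_le hn hmono.le_apply)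
  induction i with
  | zero =>
    rw [pow_zero]
    refine Tendsto.congr' ?_ (tendsto_const_nhds : Tendsto (fun _ : ℕ => (1:ℝ)) atTop (nhds 1))
    filter_upwards [eventually_ge_atTop 1] with n hn
    rw [add_zero, div_self (hrpos n hn).ne']
  | succ i IH =>
    have IH' : Tendsto (fun n => (r (n + 1 + i) : ℝ) / r (n + 1)) atTop (nhds (θ ^ i)) :=
      (tendsto_add_atTop_iff_nat 1).2 IH
    have hmul := IH'.mul h
    rw [← pow_succ] at hmul
    refine hmul.congr' ?_
    filter_upwards [eventually_ge_atTop 1] with n hn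
    have hb : ((r (n + 1) : ℝ)) ≠ 0 := (hrpos (n + 1) (by omega)).ne'
    have : n + 1 + i = n + (i + 1) := by omega
    rw [this, div_mul_div_comm, mul_comm ((r (n + (i + 1)) : ℝ)) _, mul_div_mul_left _ _ hb]

lemma sum_ratio (r : ℕ → ℕ) (hmono : StrictMono r) (θ : ℝ)
    (h : Tendsto (fun n => (r (n + 1) : ℝ) / r n) atTop (nhds θ)) (d : ℕ) (b : ℕ → ℝ) :
    Tendsto (fun n => (∑ i ∈ Finset.range (d + 1), b i * r (n + i)) / r n) atTop
      (nhds (∑ i ∈ Finset.range (d + 1), b i * θ ^ i)) := by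
  have := tendsto_finset_sum (Finset.range (d + 1))
    (fun i _ => ((ratio_pow r hmono θ h i).const_mul (b i)))
  refine this.congr fun n => ?_
  rw [Finset.sum_div]
  exact Finset.sum_congr rfl fun i _ => (mul_div_assoc _ _ _).symm

lemma ratio_zero (r r' : ℕ → ℕ) (hm : StrictMono r) (hm' : StrictMono r') (θ θ' : ℝ)
    (hθ : 0 < θ) (hlt : θ < θ')
    (h1 : Tendsto (fun n => (r (n + 1) : ℝ) / r n) atTop (nhds θ))
    (h2 : Tendsto (fun n => (r' (n + 1) : ℝ) / r' n) atTop (nhds θ')) :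
    Tendsto (fun n => (r n : ℝ) / r' n) atTop (nhds 0) := by
  set ρ1 := θ + (θ' - θ) / 3 with hρ1
  set ρ2 := θ' - (θ' - θ) / 3 with hρ2
  have hρ1pos : 0 < ρ1 := by rw [hρ1]; linarith
  have hρ12 : ρ1 < ρ2 := by rw [hρ1, hρ2]; linarith
  have hρ2pos : 0 < ρ2 := lt_trans hρ1pos hρ12
  have hq1 : (0:ℝ) ≤ ρ1 / ρ2 := le_of_lt (div_pos hρ1pos hρ2pos)
  have hq2 : ρ1 / ρ2 < 1 := (div_lt_one hρ2pos).2 hρ12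
  have hrpos : ∀ n : ℕ, 1 ≤ n → (0 : ℝ) < r n := fun n hn =>
    Nat.cast_pos.2 (lt_of_lt_of_le hn hm.le_apply)
  have hrpos' : ∀ n : ℕ, 1 ≤ n → (0 : ℝ) < r' n := fun n hn =>
    Nat.cast_pos.2 (lt_of_lt_of_le hn hm'.le_apply)
  have e1 : ∀ᶠ n in atTop, (r (n + 1) : ℝ) / r n < ρ1 :=
    h1.eventually_lt_const (by rw [hρ1]; linarith)
  have e2 : ∀ᶠ n in atTop, ρ2 < (r' (n + 1) : ℝ) / r' n :=
    h2.eventually_const_lt (by rw [hρ2]; linarith)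
  rw [eventually_atTop] at e1 e2
  obtain ⟨N1, hN1⟩ := e1
  obtain ⟨N2, hN2⟩ := e2
  set N := max (max N1 N2) 1 with hNdef
  have hNN1 : N1 ≤ N := le_trans (le_max_left _ _) (le_max_left _ _)
  have hNN2 : N2 ≤ N := le_trans (le_max_right _ _) (le_max_left _ _)
  have hN1le : 1 ≤ N := le_max_right _ _
  set q := ρ1 / ρ2 with hqdef
  have key : ∀ n, N ≤ n → (r (n + 1) : ℝ) / r' (n + 1) ≤ q * ((r n : ℝ) / r' n) := by
    intro n hn
    have hrn : (0:ℝ) < r n := hrpos n (le_trans hN1le hn)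
    have hrn' : (0:ℝ) < r' n := hrpos' n (le_trans hN1le hn)
    have hb1 : (r (n + 1) : ℝ) ≤ ρ1 * r n := by
      have := hN1 n (le_trans hNN1 hn)
      rw [div_lt_iff₀ hrn] at this
      linarith
    have hb2 : ρ2 * r' n ≤ (r' (n + 1) : ℝ) := by
      have := hN2 n (le_trans hNN2 hn)
      rw [lt_div_iff₀ hrn'] at this
      linarith
    have hden : (0:ℝ) < ρ2 * r' n := mul_pos hρ2pos hrn'
    calc (r (n + 1) : ℝ) / r' (n + 1) ≤ (ρ1 * r n) / (ρ2 * r' n) :=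
          div_le_div₀ (by positivity) hb1 hden hb2
      _ = q * ((r n : ℝ) / r' n) := by rw [hqdef]; field_simp
  have geom : ∀ m : ℕ, (r (N + m) : ℝ) / r' (N + m) ≤ q ^ m * ((r N : ℝ) / r' N) := by
    intro m
    induction m with
    | zero => simp
    | succ m IH =>
      have := key (N + m) (Nat.le_add_right _ _)
      calc (r (N + (m + 1)) : ℝ) / r' (N + (m + 1)) = (r (N + m + 1) : ℝ) / r' (N + m + 1) := by
            rw [Nat.add_assoc]
        _ ≤ q * ((r (N + m) : ℝ) / r' (N + m)) := this
        _ ≤ q * (q ^ m * ((r N : ℝ) / r' N)) :=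
            mul_le_mul_of_nonneg_left IH hq1
        _ = q ^ (m + 1) * ((r N : ℝ) / r' N) := by ring
  refine squeeze_zero' (g := fun n => q ^ (n - N) * ((r N : ℝ) / r' N)) (Filter.Eventually.of_forall fun n => by positivity) ?_ ?_
  · refine eventually_atTop.2 ⟨N, fun n hn => ?_⟩
    calc (r n : ℝ) / r' n = (r (N + (n - N)) : ℝ) / r' (N + (n - N)) := by
          rw [Nat.add_sub_cancel' hn]
      _ ≤ q ^ (n - N) * ((r N : ℝ) / r' N) := geom (n - N)
  · have hN0 : Tendsto (fun n : ℕ => q ^ (n - N)) atTop (nhds 0) :=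
      (tendsto_pow_atTop_nhds_zero_of_lt_one hq1 hq2).comp (tendsto_sub_atTop_nat N)
    have := hN0.mul_const ((r N : ℝ) / r' N)
    rwa [zero_mul] at this



lemma sum_ratio_gen (u : ℕ → ℝ) (L : ℕ → ℝ) (d : ℕ) (b : ℕ → ℝ)
    (h : ∀ i, Tendsto (fun n => u (n + i) / u n) atTop (nhds (L i))) :
    Tendsto (fun n => (∑ i ∈ Finset.range (d + 1), b i * u (n + i)) / u n) atTop
      (nhds (∑ i ∈ Finset.range (d + 1), b i * L i)) := by
  have := tendsto_finset_sum (Finset.range (d + 1)) (fun i _ => ((h i).const_mul (b i)))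
  refine this.congr fun n => ?_
  rw [Finset.sum_div]
  exact Finset.sum_congr rfl fun i _ => (mul_div_assoc _ _ _).symm

lemma sum_ratio_add (r r' : ℕ → ℕ) (hm : StrictMono r) (hm' : StrictMono r') (θ : ℝ)
    (h1 : Tendsto (fun n => (r (n + 1) : ℝ) / r n) atTop (nhds θ))
    (h2 : Tendsto (fun n => (r' (n + 1) : ℝ) / r' n) atTop (nhds θ)) (i : ℕ) :
    Tendsto (fun n => ((r (n + i) : ℝ) + (r' (n + i) : ℝ)) / ((r n : ℝ) + (r' n : ℝ))) atTop
      (nhds (θ ^ i)) := by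
  have hx := ratio_pow r hm θ h1 i
  have hy := ratio_pow r' hm' θ h2 i
  have hmin : Tendsto (fun n => min ((r (n + i) : ℝ) / r n) ((r' (n + i) : ℝ) / r' n)) atTop
      (nhds (θ ^ i)) := by
    have := hx.min hy; rwa [min_self] at this
  have hmax : Tendsto (fun n => max ((r (n + i) : ℝ) / r n) ((r' (n + i) : ℝ) / r' n)) atTop
      (nhds (θ ^ i)) := by
    have := hx.max hy; rwa [max_self] at this
  refine tendsto_of_tendsto_of_tendsto_of_le_of_le' hmin hmax ?_ ?_
  · filter_upwards [eventually_ge_atTop 1] with n hn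
    have hc : (0:ℝ) < r n := Nat.cast_pos.2 (lt_of_lt_of_le hn hm.le_apply)
    have hd : (0:ℝ) < r' n := Nat.cast_pos.2 (lt_of_lt_of_le hn hm'.le_apply)
    rw [le_div_iff₀ (by positivity)]
    have ha1 : min ((r (n + i) : ℝ) / r n) ((r' (n + i) : ℝ) / r' n) * r n ≤ r (n + i) :=
      (le_div_iff₀ hc).1 (min_le_left _ _)
    have ha2 : min ((r (n + i) : ℝ) / r n) ((r' (n + i) : ℝ) / r' n) * r' n ≤ r' (n + i) :=
      (le_div_iff₀ hd).1 (min_le_right _ _)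
    have hexp : min ((r (n + i) : ℝ) / r n) ((r' (n + i) : ℝ) / r' n) * ((r n : ℝ) + r' n)
        = min ((r (n + i) : ℝ) / r n) ((r' (n + i) : ℝ) / r' n) * r n
          + min ((r (n + i) : ℝ) / r n) ((r' (n + i) : ℝ) / r' n) * r' n := by ring
    linarith
  · filter_upwards [eventually_ge_atTop 1] with n hn
    have hc : (0:ℝ) < r n := Nat.cast_pos.2 (lt_of_lt_of_le hn hm.le_apply)
    have hd : (0:ℝ) < r' n := Nat.cast_pos.2 (lt_of_lt_of_le hn hm'.le_apply)
    rw [div_le_iff₀ (by positivity)]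
    have ha1 : (r (n + i) : ℝ) ≤ max ((r (n + i) : ℝ) / r n) ((r' (n + i) : ℝ) / r' n) * r n :=
      (div_le_iff₀ hc).1 (le_max_left _ _)
    have ha2 : (r' (n + i) : ℝ) ≤ max ((r (n + i) : ℝ) / r n) ((r' (n + i) : ℝ) / r' n) * r' n :=
      (div_le_iff₀ hd).1 (le_max_right _ _)
    have hexp : max ((r (n + i) : ℝ) / r n) ((r' (n + i) : ℝ) / r' n) * ((r n : ℝ) + r' n)
        = max ((r (n + i) : ℝ) / r n) ((r' (n + i) : ℝ) / r' n) * r n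
          + max ((r (n + i) : ℝ) / r n) ((r' (n + i) : ℝ) / r' n) * r' n := by ring
    linarith

lemma finite_of_tendsto_ne_zero (f : ℕ → ℤ) (g : ℕ → ℝ) (L : ℝ) (hL : L ≠ 0)
    (h : Tendsto (fun n => (f n : ℝ) / g n) atTop (nhds L)) : {n | f n = 0}.Finite := by
  have h1 := h.eventually_ne hL
  have h2 : ∀ᶠ n in atTop, f n ≠ 0 := h1.mono fun n hn h0 => hn (by rw [h0]; simp)
  rw [← Nat.cofinite_eq_atTop] at h2
  simpa using Filter.eventually_cofinite.mp h2

lemma alg_of_root (d : ℕ) (a : ℕ → ℤ) (had : a d ≠ 0) (x : ℝ)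
    (hroot : ∑ i ∈ Finset.range (d + 1), (a i : ℝ) * x ^ i = 0) : IsAlgebraic ℚ x := by
  refine ⟨∑ i ∈ Finset.range (d + 1), Polynomial.C ((a i : ℚ)) * Polynomial.X ^ i, ?_, ?_⟩
  · intro h0
    have : (∑ i ∈ Finset.range (d + 1), Polynomial.C ((a i : ℚ)) * Polynomial.X ^ i).coeff d
        = 0 := by rw [h0]; simp
    rw [coeff_sum_C_mul_X_pow, if_pos (Nat.lt_succ_self d)] at this
    exact had (by exact_mod_cast this)
  · rw [map_sum]
    simp only [map_mul, Polynomial.aeval_C, map_pow, Polynomial.aeval_X]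
    rw [← hroot]
    refine Finset.sum_congr rfl fun i _ => ?_
    norm_num

lemma int_kill (r : ℕ → ℕ) (θ : ℝ) (hrec : SatisfiesRecurrenceMinpoly r θ) (d : ℕ) (a : ℕ → ℤ)
    (hroot : ∑ i ∈ Finset.range (d + 1), (a i : ℝ) * θ ^ i = 0) :
    ∀ n, ∑ i ∈ Finset.range (d + 1), a i * (r (n + i) : ℤ) = 0 := by
  obtain ⟨k, hk, c, hc, hpoly⟩ := hrec
  set P : ℚ[X] := ∑ i ∈ Finset.range (d + 1), Polynomial.C ((a i : ℚ)) * Polynomial.X ^ i with hP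
  set μ : ℚ[X] := Polynomial.X ^ k - ∑ i ∈ Finset.range k, Polynomial.C ((c i : ℚ)) * Polynomial.X ^ i with hμdef
  have hcoeffμ : ∀ i, μ.coeff i = (if i = k then 1 else 0) - (if i < k then (c i : ℚ) else 0) := by
    intro i
    rw [hμdef, Polynomial.coeff_sub, Polynomial.coeff_X_pow, coeff_sum_C_mul_X_pow]
  have hμdeg : μ.natDegree ≤ k := by
    rw [Polynomial.natDegree_le_iff_coeff_eq_zero]
    intro m hm
    rw [hcoeffμ, if_neg (by omega), if_neg (by omega), sub_zero]
  have hcoeffP : ∀ i, P.coeff i = (if i < d + 1 then (a i : ℚ) else 0) := fun i =>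
    coeff_sum_C_mul_X_pow (d + 1) _ i
  have hPdeg : P.natDegree ≤ d := by
    rw [Polynomial.natDegree_le_iff_coeff_eq_zero]
    intro m hm
    rw [hcoeffP, if_neg (by omega)]
  have haeval : Polynomial.aeval θ P = 0 := by
    rw [hP, map_sum]
    simp only [map_mul, Polynomial.aeval_C, map_pow, Polynomial.aeval_X]
    rw [← hroot]
    refine Finset.sum_congr rfl fun i _ => ?_
    norm_num
  have hdvd : μ ∣ P := hpoly ▸ minpoly.dvd ℚ θ haeval
  set s : ℕ → ℚ := fun n => (r n : ℚ) with hs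
  have hμ0 : ∀ n, papply s μ n = 0 := by
    intro n
    rw [← papply_eq_sum s μ n (k + 1) (by omega), Finset.sum_range_succ]
    have h1 : ∀ i ∈ Finset.range k, μ.coeff i * s (n + i) = -((c i : ℚ) * s (n + i)) := by
      intro i hi
      rw [hcoeffμ, if_neg (Finset.mem_range.1 hi).ne,
        if_pos (Finset.mem_range.1 hi)]
      ring
    rw [Finset.sum_congr rfl h1, hcoeffμ, if_pos rfl, if_neg (lt_irrefl k), sub_zero, one_mul,
      Finset.sum_neg_distrib]
    have hq : s (n + k) = ∑ i ∈ Finset.range k, (c i : ℚ) * s (n + i) := by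
      simp only [hs]
      exact_mod_cast hc n
    rw [hq]
    ring
  have hP0 := papply_of_dvd s μ hμ0 P hdvd
  intro n
  have h2 : ∑ i ∈ Finset.range (d + 1), P.coeff i * s (n + i) = 0 := by
    rw [papply_eq_sum s P n (d + 1) (by omega)]
    exact hP0 n
  have h3 : ∑ i ∈ Finset.range (d + 1), ((a i : ℚ)) * (r (n + i) : ℚ) = 0 := by
    rw [← h2]
    exact Finset.sum_congr rfl fun i hi => by rw [hcoeffP, if_pos (Finset.mem_range.1 hi)]
  exact_mod_cast h3

/-- let `r`, `r'` be regular sequences with ratio limits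
`1 < θ ≤ θ'`, and set `r''_n = r_n + r'_n`. Then for all integers
`a₀, …, a_d` with `a_d ≠ 0`, the set
`{n | a₀ r''_n + ⋯ + a_d r''_{n+d} = 0}` is finite or cofinite in `ℕ`. -/
theorem operator_zeros_finite_or_cofinite_of_sum_of_regular
    (r r' : ℕ → ℕ) (hr : IsRegularSequence r) (hr' : IsRegularSequence r')
    (θ θ' : ℝ) (hθ : 1 < θ) (hθθ' : θ ≤ θ')
    (h1 : Tendsto (fun n => (r (n + 1) : ℝ) / r n) atTop (nhds θ))
    (h2 : Tendsto (fun n => (r' (n + 1) : ℝ) / r' n) atTop (nhds θ'))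
    (d : ℕ) (a : ℕ → ℤ) (had : a d ≠ 0) :
    {n : ℕ | (∑ i ∈ Finset.range (d + 1),
        a i * ((r (n + i) : ℤ) + (r' (n + i) : ℤ))) = 0}.Finite ∨
      {n : ℕ | (∑ i ∈ Finset.range (d + 1),
        a i * ((r (n + i) : ℤ) + (r' (n + i) : ℤ))) ≠ 0}.Finite := by
  obtain ⟨hmono, hcase⟩ := hr
  obtain ⟨hmono', hcase'⟩ := hr'
  have halg : IsAlgebraic ℚ θ → SatisfiesRecurrenceMinpoly r θ := by
    rcases hcase with hA | ⟨θ₀, _, ht, h⟩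
    · exact absurd hA (not_tendsto_atTop_of_tendsto_nhds h1)
    · rwa [tendsto_nhds_unique ht h1] at h
  have halg' : IsAlgebraic ℚ θ' → SatisfiesRecurrenceMinpoly r' θ' := by
    rcases hcase' with hA | ⟨θ₀, _, ht, h⟩
    · exact absurd hA (not_tendsto_atTop_of_tendsto_nhds h2)
    · rwa [tendsto_nhds_unique ht h2] at h
  set f : ℕ → ℤ := fun n => ∑ i ∈ Finset.range (d + 1),
    a i * ((r (n + i) : ℤ) + (r' (n + i) : ℤ)) with hf
  have castf : ∀ n, (f n : ℝ) = ∑ i ∈ Finset.range (d + 1),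
      (a i : ℝ) * ((r (n + i) : ℝ) + (r' (n + i) : ℝ)) := by
    intro n
    simp only [hf]
    push_cast
    ring
  have hsplit : ∀ n, f n = (∑ i ∈ Finset.range (d + 1), a i * (r (n + i) : ℤ))
      + (∑ i ∈ Finset.range (d + 1), a i * (r' (n + i) : ℤ)) := by
    intro n
    simp only [hf]
    rw [← Finset.sum_add_distrib]
    exact Finset.sum_congr rfl fun i _ => by ring
  rcases eq_or_lt_of_le hθθ' with heq | hlt
  · -- θ = θ'
    subst heq
    by_cases hPθ : ∑ i ∈ Finset.range (d + 1), (a i : ℝ) * θ ^ i = 0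
    · right
      have hA := int_kill r θ (halg (alg_of_root d a had θ hPθ)) d a hPθ
      have hB := int_kill r' θ (halg' (alg_of_root d a had θ hPθ)) d a hPθ
      have hz : ∀ n, f n = 0 := fun n => by rw [hsplit n, hA n, hB n, add_zero]
      have : {n : ℕ | f n ≠ 0} = ∅ := by
        ext n; simp [hz n]
      rw [this]
      exact Set.finite_empty
    · left
      have hcomb := sum_ratio_gen (fun n => (r n : ℝ) + (r' n : ℝ)) (fun i => θ ^ i) d
        (fun i => (a i : ℝ)) (fun i => sum_ratio_add r r' hmono hmono' θ h1 h2 i)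
      refine finite_of_tendsto_ne_zero f (fun n => (r n : ℝ) + (r' n : ℝ)) _ hPθ ?_
      refine hcomb.congr fun n => ?_
      rw [castf n]
  · -- θ < θ'
    by_cases hPθ' : ∑ i ∈ Finset.range (d + 1), (a i : ℝ) * θ' ^ i = 0
    · have hB := int_kill r' θ' (halg' (alg_of_root d a had θ' hPθ')) d a hPθ'
      have hfA : ∀ n, f n = ∑ i ∈ Finset.range (d + 1), a i * (r (n + i) : ℤ) := fun n => by
        rw [hsplit n, hB n, add_zero]
      by_cases hPθ : ∑ i ∈ Finset.range (d + 1), (a i : ℝ) * θ ^ i = 0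
      · right
        have hA := int_kill r θ (halg (alg_of_root d a had θ hPθ)) d a hPθ
        have hz : ∀ n, f n = 0 := fun n => by rw [hfA n, hA n]
        have : {n : ℕ | f n ≠ 0} = ∅ := by
          ext n; simp [hz n]
        rw [this]
        exact Set.finite_empty
      · left
        have hAr := sum_ratio_gen (fun n => (r n : ℝ)) (fun i => θ ^ i) d
          (fun i => (a i : ℝ)) (fun i => ratio_pow r hmono θ h1 i)
        refine finite_of_tendsto_ne_zero f (fun n => (r n : ℝ)) _ hPθ ?_
        refine hAr.congr fun n => ?_
        congr 1
        rw [hfA n]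
        push_cast
        ring
    · left
      have hAr := sum_ratio_gen (fun n => (r n : ℝ)) (fun i => θ ^ i) d
        (fun i => (a i : ℝ)) (fun i => ratio_pow r hmono θ h1 i)
      have hBr := sum_ratio_gen (fun n => (r' n : ℝ)) (fun i => θ' ^ i) d
        (fun i => (a i : ℝ)) (fun i => ratio_pow r' hmono' θ' h2 i)
      have h0 := ratio_zero r r' hmono hmono' θ θ' (lt_trans zero_lt_one hθ) hlt h1 h2
      have hsum := (hAr.mul h0).add hBr
      rw [mul_zero, zero_add] at hsum
      refine finite_of_tendsto_ne_zero f (fun n => (r' n : ℝ)) _ hPθ' ?_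
      refine hsum.congr' ?_
      filter_upwards [eventually_ge_atTop 1] with n hn
      have hr0 : (r n : ℝ) ≠ 0 :=
        (Nat.cast_pos.2 (lt_of_lt_of_le hn hmono.le_apply)).ne'
      have key : (∑ i ∈ Finset.range (d + 1), (a i : ℝ) * (r (n + i) : ℝ)) / (r n : ℝ)
          * ((r n : ℝ) / (r' n : ℝ))
          = (∑ i ∈ Finset.range (d + 1), (a i : ℝ) * (r (n + i) : ℝ)) / (r' n : ℝ) := by
        rw [div_mul_div_comm, mul_comm (∑ i ∈ Finset.range (d + 1), (a i : ℝ) * (r (n + i) : ℝ)) _,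
          mul_div_mul_left _ _ hr0]
      rw [key, ← add_div, castf n]
      congr 1
      rw [← Finset.sum_add_distrib]
      exact Finset.sum_congr rfl fun i _ => by ring
end
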